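/- Let G be a finite group and N ⊴ G with G/N solvable, and suppose every element of G \ N has prime power order with exactly two primes p, q dividing these orders. Then there exists a normal subgroup M of G with N ≤ M, and Sylow subgroups P ∈ Syl_p(G), Q ∈ Syl_q(G), such that M = NQ, G = MP, (G, P, P ∩ M) is a Frobenius-Wielandt triple, and either M = Q or (M, Q, Q ∩ N) is a Frobenius-Wielandt triple — provided G/N is a Frobenius group whose kernel is a q-group and whose complement is a p-group. -/

import Mathlib

open Subgroup

/-- `C` is a Frobenius complement in the ambient group: `1 < C < G` and
`C ∩ C^x = 1` for all `x ∉ C`. -/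
def IsFrobeniusComplementIn {X : Type*} [Group X] (C : Subgroup X) : Prop :=
  ⊥ < C ∧ C < ⊤ ∧ ∀ x : X, x ∉ C → C ⊓ C.map (MulAut.conj x).toMonoidHom = ⊥

/-- `X` is a Frobenius group. -/
def IsFrobeniusGroup (X : Type*) [Group X] : Prop :=
  ∃ C : Subgroup X, IsFrobeniusComplementIn C

/-- `K` is the Frobenius kernel of the ambient group: `K` is a proper nontrivial
normal subgroup admitting a Frobenius complement `C` with `X = K ⋊ C`. -/
def IsFrobeniusKernelIn {X : Type*} [Group X] (K : Subgroup X) : Prop :=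
  K.Normal ∧ ⊥ < K ∧ K < ⊤ ∧ ∃ C : Subgroup X,
    (∀ x : X, x ∉ C → C ⊓ C.map (MulAut.conj x).toMonoidHom = ⊥) ∧
    K ⊔ C = ⊤ ∧ K ⊓ C = ⊥

/-- `(X, H, L)` is a Frobenius–Wielandt triple: `L ⊴ H`, `L < H < X`, and
`H ∩ H^g ≤ L` for all `g ∉ H`. -/
def IsFWTriple {X : Type*} [Group X] (H L : Subgroup X) : Prop :=
  L ≤ H ∧ (L.subgroupOf H).Normal ∧ L < H ∧ H < ⊤ ∧
    ∀ g : X, g ∉ H → H ⊓ H.map (MulAut.conj g).toMonoidHom ≤ L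

/-- `X` is a 2-Frobenius group: there are normal subgroups `K < L < X` with
`X/K` a Frobenius group with kernel `L/K` and `L` a Frobenius group with kernel `K`. -/
def Is2FrobeniusGroup (X : Type*) [Group X] : Prop :=
  ∃ (K L : Subgroup X) (hK : K.Normal), L.Normal ∧ ⊥ < K ∧ K < L ∧ L < ⊤ ∧
    (@IsFrobeniusKernelIn _ (@QuotientGroup.Quotient.group X _ K hK)
      (L.map (@QuotientGroup.mk' X _ K hK))) ∧
    IsFrobeniusKernelIn (K.subgroupOf L)

universe u

namespace FWaux

variable {p : ℕ}

lemma prime_eq_of_dvd_pow [Fact p.Prime] {ℓ k : ℕ} (hℓ : ℓ.Prime) (h : ℓ ∣ p ^ k) : ℓ = p :=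
  (Nat.prime_dvd_prime_iff_eq hℓ Fact.out).mp (hℓ.dvd_of_dvd_pow h)

variable {H : Type u} [Group H]

lemma exists_prime_order_pow [Fact p.Prime] [Finite H] (g : H) (h : ¬ ∃ k, g ^ p ^ k = 1) :
    ∃ (ℓ : ℕ) (s : H), ℓ.Prime ∧ ℓ ≠ p ∧ orderOf s = ℓ ∧ s ∈ zpowers g := by
  have hn : orderOf g ≠ 0 := (orderOf_pos g).ne'
  have hm1 : ordCompl[p] (orderOf g) ≠ 1 := by
    intro he
    refine h ⟨(orderOf g).factorization p, ?_⟩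
    have h2 : p ^ (orderOf g).factorization p = orderOf g := by
      have h3 := Nat.ordProj_mul_ordCompl_eq_self (orderOf g) p
      rw [he, mul_one] at h3; exact h3
    rw [h2]; exact pow_orderOf_eq_one g
  have hmn : ordCompl[p] (orderOf g) ∣ orderOf g := Nat.ordCompl_dvd (orderOf g) p
  have hl : (ordCompl[p] (orderOf g)).minFac.Prime := Nat.minFac_prime hm1
  have hlp : (ordCompl[p] (orderOf g)).minFac ≠ p := by
    intro he
    have hdd : (ordCompl[p] (orderOf g)).minFac ∣ ordCompl[p] (orderOf g) := Nat.minFac_dvd _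
    rw [he] at hdd
    exact Nat.not_dvd_ordCompl (Fact.out : p.Prime) hn hdd
  refine ⟨_, g ^ (orderOf g / (ordCompl[p] (orderOf g)).minFac), hl, hlp, ?_, ?_⟩
  · exact orderOf_pow_orderOf_div hn ((Nat.minFac_dvd (ordCompl[p] (orderOf g))).trans hmn)
  · exact pow_mem (mem_zpowers g) _

lemma fixedpoint_lemma [Fact p.Prime] [Finite H] {ℓ : ℕ} [Fact ℓ.Prime] (hlp : ℓ ≠ p)
    (C : Subgroup H) (hC : IsPGroup p C) (r x : H) (hr : r ∈ (normalizer (C : Set H)))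
    (hord : orderOf r = ℓ) (hcond : r⁻¹ * x⁻¹ * r * x ∈ C) :
    ∃ c ∈ C, Commute r (x * c) := by
  have key : ∀ g ∈ (normalizer (C : Set H)), ∀ c ∈ C, g * c * g⁻¹ ∈ C := fun g hg c hc =>
    (mem_normalizer_iff.mp hg c).mp hc
  have key' : ∀ g ∈ (normalizer (C : Set H)), ∀ c ∈ C, g⁻¹ * c * g ∈ C := fun g hg c hc =>
    (mem_normalizer_iff''.mp hg c).mp hc
  -- the subgroup of elements normalizing C and the coset x C
  let T : Subgroup H :=
    { carrier := {g | g ∈ (normalizer (C : Set H)) ∧ g⁻¹ * x⁻¹ * g * x ∈ C}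
      one_mem' := ⟨(normalizer (C : Set H)).one_mem, by simpa using C.one_mem⟩
      mul_mem' := by
        rintro g h ⟨hg1, hg2⟩ ⟨hh1, hh2⟩
        refine ⟨mul_mem hg1 hh1, ?_⟩
        have he : (g*h)⁻¹ * x⁻¹ * (g*h) * x
            = (h⁻¹ * (g⁻¹ * x⁻¹ * g * x) * h) * (h⁻¹ * x⁻¹ * h * x) := by group
        rw [he]
        exact mul_mem (key' h hh1 _ hg2) hh2
      inv_mem' := by
        rintro g ⟨hg1, hg2⟩
        refine ⟨inv_mem hg1, ?_⟩
        have he : (g⁻¹)⁻¹ * x⁻¹ * g⁻¹ * x = g * (g⁻¹ * x⁻¹ * g * x)⁻¹ * g⁻¹ := by group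
        rw [he]
        exact key g hg1 _ (inv_mem hg2) }
  have hrT : r ∈ T := ⟨hr, hcond⟩
  have hzT : ∀ k : ℤ, r ^ k ∈ T := fun k => T.zpow_mem hrT k
  have hmem : ∀ (g : zpowers r) (c : C), x⁻¹ * (g : H) * x * (c : H) * (g : H)⁻¹ ∈ C := by
    rintro ⟨g, hg⟩ ⟨c, hc⟩
    obtain ⟨k, rfl⟩ := hg
    obtain ⟨hg1, hg2⟩ := hzT k
    have he : x⁻¹ * (r^k : H) * x * c * ((r^k : H))⁻¹
        = ((r^k) * ((r^k)⁻¹ * x⁻¹ * (r^k) * x) * (r^k)⁻¹) * ((r^k) * c * (r^k)⁻¹) := by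
      group
    simp only []
    rw [he]
    exact mul_mem (key _ hg1 _ hg2) (key _ hg1 c hc)
  letI instS : SMul (zpowers r) C :=
    ⟨fun g c => ⟨x⁻¹ * (g : H) * x * (c : H) * (g : H)⁻¹, hmem g c⟩⟩
  have hsmul : ∀ (g : zpowers r) (c : C),
      ((g • c : C) : H) = x⁻¹ * (g : H) * x * (c : H) * (g : H)⁻¹ := fun g c => rfl
  letI : MulAction (zpowers r) C :=
    { smul := (· • ·)
      one_smul := fun c => Subtype.ext (by rw [hsmul]; push_cast; group)
      mul_smul := fun g h c => Subtype.ext (by rw [hsmul, hsmul, hsmul]; push_cast; group) }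
  have hpg : IsPGroup ℓ (zpowers r) :=
    IsPGroup.of_card (by rw [Nat.card_zpowers, hord, pow_one])
  have hmod := hpg.card_modEq_card_fixedPoints (α := C)
  obtain ⟨a, ha⟩ := hC.exists_card_eq
  have hne : Nat.card (MulAction.fixedPoints (zpowers r) C) ≠ 0 := by
    intro h0
    rw [ha, h0] at hmod
    have : ℓ ∣ p ^ a := (Nat.modEq_zero_iff_dvd.mp hmod)
    exact hlp (prime_eq_of_dvd_pow Fact.out this)
  have hnon : Nonempty (MulAction.fixedPoints (zpowers r) C) := by
    rcases Nat.card_pos_iff.mp (Nat.pos_of_ne_zero hne) with ⟨h1, _⟩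
    exact h1
  obtain ⟨⟨c0, hc0⟩⟩ := hnon
  have hfix := hc0 (⟨r, mem_zpowers r⟩ : zpowers r)
  have h1 : x⁻¹ * r * x * (c0 : H) * r⁻¹ = (c0 : H) := by
    have := congrArg (Subtype.val) hfix
    rw [hsmul] at this
    exact this
  refine ⟨(c0 : H), c0.2, ?_⟩
  show r * (x * (c0 : H)) = (x * (c0 : H)) * r
  calc r * (x * (c0 : H)) = x * (x⁻¹ * r * x * (c0 : H) * r⁻¹) * r := by group
  _ = (x * (c0 : H)) * r := by rw [h1]

lemma normalizing_pelement [Fact p.Prime] [Finite H] (N : Subgroup H) [N.Normal]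
    (hyp : ∀ h : H, h ∉ N → ∃ k, h ^ p ^ k = 1)
    (V : Subgroup H) (hV : IsPGroup p V) {x : H} (hx : x ∈ V) (hxN : x ∉ N)
    {r : H} (hrV : r ∈ (normalizer (V : Set H))) (hrN : r ∈ N) : ∃ k, r ^ p ^ k = 1 := by
  by_contra hcon
  obtain ⟨ℓ, s, hℓ, hℓp, hs, hsz⟩ := exists_prime_order_pow r hcon
  haveI : Fact ℓ.Prime := ⟨hℓ⟩
  have hsN : s ∈ N := by
    obtain ⟨k, rfl⟩ := hsz; exact N.zpow_mem hrN k
  have hsV : s ∈ (normalizer (V : Set H)) := by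
    obtain ⟨k, rfl⟩ := hsz; exact (normalizer (V : Set H)).zpow_mem hrV k
  have hC : IsPGroup p (V ⊓ N : Subgroup H) := IsPGroup.to_inf_left hV (K := N)
  have hsC : s ∈ normalizer ((V ⊓ N : Subgroup H) : Set H) := by
    rw [mem_normalizer_iff]
    intro g
    constructor
    · rintro ⟨hg1, hg2⟩
      exact ⟨(mem_normalizer_iff.mp hsV g).mp hg1, Subgroup.Normal.conj_mem ‹N.Normal› g hg2 s⟩
    · rintro ⟨hg1, hg2⟩
      refine ⟨(mem_normalizer_iff.mp hsV g).mpr hg1, ?_⟩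
      have h2 : s⁻¹ * (s * g * s⁻¹) * (s⁻¹)⁻¹ ∈ N := Subgroup.Normal.conj_mem ‹N.Normal› _ hg2 s⁻¹
      simpa [mul_assoc] using h2
  have hcond : s⁻¹ * x⁻¹ * s * x ∈ V ⊓ N := by
    refine mem_inf.mpr ⟨?_, ?_⟩
    · have h1 : s⁻¹ * x⁻¹ * (s⁻¹)⁻¹ ∈ V := (mem_normalizer_iff.mp (inv_mem hsV) x⁻¹).mp (inv_mem hx)
      rw [inv_inv] at h1
      exact mul_mem h1 hx
    · have h1 : x⁻¹ * s * (x⁻¹)⁻¹ ∈ N := Subgroup.Normal.conj_mem ‹N.Normal› s hsN x⁻¹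
      rw [inv_inv] at h1
      have he : s⁻¹ * x⁻¹ * s * x = s⁻¹ * (x⁻¹ * s * x) := by group
      rw [he]
      exact mul_mem (inv_mem hsN) h1
  obtain ⟨c, hcC, hcomm⟩ := fixedpoint_lemma hℓp (V ⊓ N) hC s x hsC hs hcond
  have hcV : c ∈ V := (mem_inf.mp hcC).1
  have hcN : c ∈ N := (mem_inf.mp hcC).2
  have hvV : x * c ∈ V := mul_mem hx hcV
  have hvN : x * c ∉ N := by
    intro hm
    exact hxN (by simpa using mul_mem hm (inv_mem hcN))
  obtain ⟨k0, hk0⟩ := hV ⟨x * c, hvV⟩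
  have hk0' : (x * c) ^ p ^ k0 = 1 := by
    have := congrArg (Subtype.val) hk0
    push_cast at this
    exact this
  obtain ⟨k1, hk1⟩ := hyp ((x * c) * s) (by
    intro hm
    exact hvN (by simpa using mul_mem hm (inv_mem hsN)))
  have hcomm' : Commute (x * c) s := hcomm.symm
  have hs1 : s ^ (p ^ (k0 + k1)) = 1 := by
    have h2 : ((x * c) * s) ^ p ^ (k0 + k1) = (x * c) ^ p ^ (k0 + k1) * s ^ p ^ (k0 + k1) :=
      hcomm'.mul_pow _
    have hA : (x * c) ^ p ^ (k0 + k1) = 1 := by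
      rw [pow_add, pow_mul, hk0', one_pow]
    have hB : ((x * c) * s) ^ p ^ (k0 + k1) = 1 := by
      rw [pow_add, Nat.mul_comm, pow_mul, hk1, one_pow]
    rw [hB, hA, one_mul] at h2
    exact h2.symm
  have : ℓ ∣ p ^ (k0 + k1) := hs ▸ orderOf_dvd_of_pow_eq_one hs1
  exact hℓp (prime_eq_of_dvd_pow hℓ this)

lemma isPGroup_subgroupOf {A B : Subgroup H} (hA : IsPGroup p A) :
    IsPGroup p (A.subgroupOf B) := by
  intro g
  obtain ⟨k, hk⟩ := hA ⟨(g : B), (mem_subgroupOf.mp g.2 : ((g : B) : H) ∈ A)⟩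
  refine ⟨k, ?_⟩
  have h1 := congrArg Subtype.val hk
  push_cast at h1
  exact Subtype.ext (Subtype.ext (by push_cast; exact h1))

lemma card_lt_of_lt [Finite H] {A B : Subgroup H} (h : A < B) : Nat.card A < Nat.card B :=
  lt_of_le_of_ne (Subgroup.card_le_of_le h.le)
    (fun e => h.ne (Subgroup.eq_of_le_of_card_ge h.le e.ge))

lemma exists_mem_normalizer_sub [Fact p.Prime] [Finite H] {P D : Subgroup H}
    (hP : IsPGroup p P) (hlt : D < P) : ∃ u, u ∈ P ∧ u ∉ D ∧ u ∈ (normalizer (D : Set H)) := by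
  haveI : Group.IsNilpotent P := hP.isNilpotent
  have nc := normalizerCondition_of_isNilpotent (G := P)
  have hD' : D.subgroupOf P < ⊤ := by
    rcases lt_top_iff_ne_top.mpr (fun he => hlt.not_ge (subgroupOf_eq_top.mp he)) with h
    exact h
  obtain hlt2 := nc (D.subgroupOf P) hD'
  obtain ⟨u', hu'n, hu'd⟩ := SetLike.exists_of_lt hlt2
  refine ⟨(u' : H), u'.2, fun hd => hu'd (mem_subgroupOf.mpr hd), ?_⟩
  rw [mem_normalizer_iff]
  intro g
  constructor
  · intro hg
    have hgP : g ∈ P := hlt.le hg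
    have h2 := (mem_normalizer_iff.mp hu'n ⟨g, hgP⟩).mp (mem_subgroupOf.mpr hg)
    exact mem_subgroupOf.mp h2
  · intro hg
    have hgP : g ∈ P := by
      have h3 : (u' : H)⁻¹ * ((u' : H) * g * (u' : H)⁻¹) * (u' : H) ∈ P :=
        mul_mem (mul_mem (inv_mem u'.2) (hlt.le hg)) u'.2
      simpa [mul_assoc] using h3
    have h2 := (mem_normalizer_iff.mp hu'n ⟨g, hgP⟩).mpr
      (mem_subgroupOf.mpr (show (u' : H) * g * (u' : H)⁻¹ ∈ D from hg))
    exact mem_subgroupOf.mp h2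

theorem sylow_unique (p : ℕ) [Fact p.Prime] : ∀ (n : ℕ) (H : Type u) [Group H] [Finite H],
    Nat.card H ≤ n → ∀ (N : Subgroup H) [N.Normal],
    (∀ h : H, h ∉ N → ∃ k, h ^ p ^ k = 1) → ∀ (P R : Sylow p H) (x : H),
    x ∈ (P : Subgroup H) → x ∈ (R : Subgroup H) → x ∉ N → P = R := by
  intro n
  induction n using Nat.strong_induction_on with
  | _ n ih =>
  intro H _ _ hn N _ hyp
  have inner : ∀ (t : ℕ) (P R : Sylow p H) (x : H), x ∈ (P : Subgroup H) →
      x ∈ (R : Subgroup H) → x ∉ N →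
      Nat.card H - Nat.card ((P : Subgroup H) ⊓ (R : Subgroup H) : Subgroup H) ≤ t → P = R := by
    intro t
    induction t using Nat.strong_induction_on with
    | _ t iht =>
    intro P R x hxP hxR hxN hle
    by_contra hPR
    set D := (P : Subgroup H) ⊓ (R : Subgroup H) with hDdef
    have hxD : x ∈ D := mem_inf.mpr ⟨hxP, hxR⟩
    have hDP : D < (P : Subgroup H) := by
      refine lt_of_le_of_ne inf_le_left (fun he => hPR ?_)
      have h1 : (P : Subgroup H) ≤ (R : Subgroup H) := he ▸ inf_le_right
      exact Sylow.ext (P.3 R.isPGroup' h1).symm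
    have hDR : D < (R : Subgroup H) := by
      refine lt_of_le_of_ne inf_le_right (fun he => hPR ?_)
      have h1 : (R : Subgroup H) ≤ (P : Subgroup H) := he ▸ inf_le_left
      exact Sylow.ext (R.3 P.isPGroup' h1)
    have hDpg : IsPGroup p D := P.isPGroup'.to_le inf_le_left
    by_cases hW : (normalizer (D : Set H)) = ⊤
    · -- D is normal in H: H is a p-group, contradiction
      have hHp : IsPGroup p H := by
        intro h
        by_contra hcon
        obtain ⟨ℓ, s, hℓ, hℓp, hs, _⟩ := exists_prime_order_pow h hcon
        have hsN : s ∈ N := by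
          by_contra hsN'
          obtain ⟨k, hk⟩ := hyp s hsN'
          exact hℓp (prime_eq_of_dvd_pow hℓ (hs ▸ orderOf_dvd_of_pow_eq_one hk))
        obtain ⟨k, hk⟩ := normalizing_pelement N hyp D hDpg hxD hxN
          (show s ∈ (normalizer (D : Set H)) from hW ▸ mem_top s) hsN
        exact hℓp (prime_eq_of_dvd_pow hℓ (hs ▸ orderOf_dvd_of_pow_eq_one hk))
      have htop : IsPGroup p ((⊤ : Subgroup H)) := by
        intro g
        obtain ⟨k, hk⟩ := hHp (g : H)
        exact ⟨k, Subtype.ext (by push_cast; exact hk)⟩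
      exact hPR (Sylow.ext ((P.3 htop le_top).symm.trans (R.3 htop le_top)))
    · set W := (normalizer (D : Set H)) with hWdef
      have hDW : D ≤ W := le_normalizer
      have hxW : x ∈ W := hDW hxD
      obtain ⟨u₁, hu₁P, hu₁D, hu₁W⟩ := exists_mem_normalizer_sub P.isPGroup' hDP
      obtain ⟨u₂, hu₂R, hu₂D, hu₂W⟩ := exists_mem_normalizer_sub R.isPGroup' hDR
      set J₁ := D ⊔ zpowers u₁ with hJ₁def
      set J₂ := D ⊔ zpowers u₂ with hJ₂def
      have hJ₁P : J₁ ≤ (P : Subgroup H) := sup_le inf_le_left (zpowers_le.mpr hu₁P)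
      have hJ₁W : J₁ ≤ W := sup_le hDW (zpowers_le.mpr hu₁W)
      have hJ₂R : J₂ ≤ (R : Subgroup H) := sup_le inf_le_right (zpowers_le.mpr hu₂R)
      have hJ₂W : J₂ ≤ W := sup_le hDW (zpowers_le.mpr hu₂W)
      have hDJ₁ : D < J₁ := lt_of_le_of_ne le_sup_left
        (fun he => hu₁D (he ▸ (le_sup_right : zpowers u₁ ≤ J₁) (mem_zpowers u₁)))
      obtain ⟨S, hS⟩ := (isPGroup_subgroupOf (B := W) (P.isPGroup'.to_le hJ₁P)).exists_le_sylow
      obtain ⟨T, hT⟩ := (isPGroup_subgroupOf (B := W) (R.isPGroup'.to_le hJ₂R)).exists_le_sylow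
      obtain ⟨P₃, hP₃⟩ := (S.isPGroup'.map W.subtype).exists_le_sylow
      have hJ₁S : J₁ ≤ ((S : Subgroup W)).map W.subtype := by
        have h1 := Subgroup.map_mono (f := W.subtype) hS
        rwa [subgroupOf_map_subtype, inf_eq_left.mpr hJ₁W] at h1
      have hJ₁P₃ : J₁ ≤ (P₃ : Subgroup H) := hJ₁S.trans hP₃
      -- inner induction: P₃ = P
      have hDle : D ≤ (P₃ : Subgroup H) ⊓ (P : Subgroup H) :=
        le_inf (hDJ₁.le.trans hJ₁P₃) inf_le_left
      have hDlt : D < (P₃ : Subgroup H) ⊓ (P : Subgroup H) :=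
        lt_of_le_of_ne hDle (fun he => hu₁D
          (he ▸ mem_inf.mpr ⟨hJ₁P₃ ((le_sup_right : zpowers u₁ ≤ J₁) (mem_zpowers u₁)),
            hu₁P⟩))
      have hcard1 : Nat.card D < Nat.card ((P₃ : Subgroup H) ⊓ (P : Subgroup H) : Subgroup H) :=
        card_lt_of_lt hDlt
      have hcard2 : Nat.card ((P₃ : Subgroup H) ⊓ (P : Subgroup H) : Subgroup H) ≤ Nat.card H :=
        card_le_card_group _
      have hP₃P : P₃ = P := by
        refine iht (Nat.card H - Nat.card ((P₃ : Subgroup H) ⊓ (P : Subgroup H) : Subgroup H))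
          (by omega) P₃ P x (hJ₁P₃ ((le_sup_left : D ≤ J₁) hxD)) hxP hxN le_rfl
      -- outer induction: S = T
      have hcardW : Nat.card W < Nat.card H := by
        refine lt_of_le_of_ne (card_le_card_group _) (fun he => hW (eq_top_of_card_eq _ he))
      have hyp' : ∀ h : W, h ∉ N.subgroupOf W → ∃ k, h ^ p ^ k = 1 := by
        intro h hh
        obtain ⟨k, hk⟩ := hyp (h : H) (fun hm => hh (mem_subgroupOf.mpr hm))
        exact ⟨k, Subtype.ext (by push_cast; exact hk)⟩
      have hST : S = T := by
        refine ih (Nat.card W) (lt_of_lt_of_le hcardW hn) W le_rfl (N.subgroupOf W) hyp'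
          S T ⟨x, hxW⟩ (hS (mem_subgroupOf.mpr ((le_sup_left : D ≤ J₁) hxD)))
          (hT (mem_subgroupOf.mpr ((le_sup_left : D ≤ J₂) hxD)))
          (fun hm => hxN (mem_subgroupOf.mp hm))
      -- conclude
      have hu₂P : u₂ ∈ (P : Subgroup H) := by
        have h1 : (⟨u₂, hJ₂W ((le_sup_right : zpowers u₂ ≤ J₂) (mem_zpowers u₂))⟩ : W) ∈ (T : Subgroup W) :=
          hT (mem_subgroupOf.mpr ((le_sup_right : zpowers u₂ ≤ J₂) (mem_zpowers u₂)))
        rw [← hST] at h1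
        have h2 : u₂ ∈ ((S : Subgroup W)).map W.subtype :=
          ⟨_, h1, rfl⟩
        exact (hP₃.trans (le_of_eq (congrArg _ hP₃P))) h2
      exact hu₂D (mem_inf.mpr ⟨hu₂P, hu₂R⟩)
  intro P R x hxP hxR hxN
  exact inner (Nat.card H) P R x hxP hxR hxN (Nat.sub_le _ _)

theorem fw_intersection [Fact p.Prime] [Finite H] (N : Subgroup H) [N.Normal]
    (hyp : ∀ h : H, h ∉ N → ∃ k, h ^ p ^ k = 1) (P : Sylow p H) {g : H}
    (hg : g ∉ (P : Subgroup H)) :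
    (P : Subgroup H) ⊓ (P : Subgroup H).map (MulAut.conj g).toMonoidHom ≤ N := by
  intro x hx
  by_contra hxN
  obtain ⟨hxP, hxg⟩ := mem_inf.mp hx
  have hxR : x ∈ ((g • P : Sylow p H) : Subgroup H) := by
    rw [Sylow.coe_subgroup_smul, Subgroup.pointwise_smul_def]
    exact hxg
  have hPR : P = g • P :=
    sylow_unique p (Nat.card H) H le_rfl N hyp P (g • P) x hxP hxR hxN
  have hnorm : g ∈ normalizer ((P : Subgroup H) : Set H) := Sylow.smul_eq_iff_mem_normalizer.mp hPR.symm
  have hgp : ∃ k, g ^ p ^ k = 1 := by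
    by_cases hgN : g ∈ N
    · exact normalizing_pelement N hyp (P : Subgroup H) P.isPGroup' hxP hxN hnorm hgN
    · exact hyp g hgN
  have hzp : IsPGroup p (zpowers g) := by
    obtain ⟨k, hk⟩ := hgp
    obtain ⟨j, _, hj⟩ := (Nat.dvd_prime_pow (Fact.out : p.Prime)).mp
      (orderOf_dvd_of_pow_eq_one hk)
    exact IsPGroup.of_card (by rw [Nat.card_zpowers, hj])
  have h2 : g ∈ zpowers g ⊓ normalizer (P : Set H) := ⟨mem_zpowers g, hnorm⟩
  rw [hzp.inf_normalizer_sylow P] at h2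
  exact hg h2.2

end FWaux

theorem stmt_15 {G : Type*} [Group G] [Fintype G] (N : Subgroup G) [N.Normal]
    (hsolv : IsSolvable (G ⧸ N))
    {p q : ℕ} [Fact p.Prime] [Fact q.Prime] (hpq : p ≠ q)
    (hppo : ∀ g : G, g ∉ N → ∃ r k : ℕ, r.Prime ∧ orderOf g = r ^ k)
    (hpd : ∃ g : G, g ∉ N ∧ p ∣ orderOf g)
    (hqd : ∃ g : G, g ∉ N ∧ q ∣ orderOf g)
    (honly : ∀ r : ℕ, r.Prime → (∃ g : G, g ∉ N ∧ r ∣ orderOf g) → r = p ∨ r = q)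
    (hfrob : ∃ K C : Subgroup (G ⧸ N), K.Normal ∧ ⊥ < K ∧ K < ⊤ ∧
      (∀ x : G ⧸ N, x ∉ C → C ⊓ C.map (MulAut.conj x).toMonoidHom = ⊥) ∧
      K ⊔ C = ⊤ ∧ K ⊓ C = ⊥ ∧ IsPGroup q ↥K ∧ IsPGroup p ↥C) :
    ∃ M : Subgroup G, M.Normal ∧ N ≤ M ∧
      ∃ (P : Sylow p G) (Q : Sylow q G),
        N ⊔ (Q : Subgroup G) = M ∧ M ⊔ (P : Subgroup G) = ⊤ ∧
        IsFWTriple (P : Subgroup G) ((P : Subgroup G) ⊓ M) ∧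
        (M = Q ∨ IsFWTriple ((Q : Subgroup G).subgroupOf M)
          (((Q : Subgroup G) ⊓ N).subgroupOf M)) := by
  classical
  obtain ⟨K, C, hKn, hKbot, hKtop, hCfr, hsup, hinf, hKq, hCp⟩ := hfrob
  haveI := hKn
  set π := QuotientGroup.mk' N with hπ
  have hπs : Function.Surjective π := QuotientGroup.mk'_surjective N
  set M := K.comap π with hM
  haveI hMn : M.Normal := hKn.comap π
  have hNM : N ≤ M := by
    intro n hn
    show π n ∈ K
    have h1 : π n = 1 := (QuotientGroup.eq_one_iff n).mpr hn
    rw [h1]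
    exact K.one_mem
  have hcopr : Nat.Coprime q p := (Nat.coprime_primes Fact.out Fact.out).mpr (Ne.symm hpq)
  -- all q-elements of G/N lie in K
  have GK : ∀ y : G ⧸ N, (∃ j, y ^ q ^ j = 1) → y ∈ K := by
    rintro y ⟨j, hj⟩
    have h1 : Subgroup.map (QuotientGroup.mk' K) C = ⊤ := by
      have h2 : Subgroup.map (QuotientGroup.mk' K) (K ⊔ C) = ⊤ := by
        rw [hsup]; exact Subgroup.map_top_of_surjective _ (QuotientGroup.mk'_surjective K)
      rw [Subgroup.map_sup, (Subgroup.map_eq_bot_iff _).mpr (le_of_eq (QuotientGroup.ker_mk' K).symm),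
        bot_sup_eq] at h2
      exact h2
    have h4 : (QuotientGroup.mk' K) y ∈ Subgroup.map (QuotientGroup.mk' K) C := by
      rw [h1]; exact Subgroup.mem_top _
    obtain ⟨c, hcC, hc⟩ := h4
    obtain ⟨sc, hsc⟩ := hCp ⟨c, hcC⟩
    have hsc' : c ^ p ^ sc = 1 := by
      have := congrArg Subtype.val hsc; push_cast at this; exact this
    have e1 : ((QuotientGroup.mk' K) y) ^ q ^ j = 1 := by rw [← map_pow, hj, map_one]
    have e2 : ((QuotientGroup.mk' K) y) ^ p ^ sc = 1 := by rw [← hc, ← map_pow, hsc', map_one]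
    have hone : (QuotientGroup.mk' K) y = 1 := by
      rw [← orderOf_eq_one_iff]
      have hd := Nat.dvd_gcd (orderOf_dvd_of_pow_eq_one e1) (orderOf_dvd_of_pow_eq_one e2)
      have hg1 : Nat.gcd (q ^ j) (p ^ sc) = 1 := Nat.Coprime.pow _ _ hcopr
      rwa [hg1, Nat.dvd_one] at hd
    exact (QuotientGroup.eq_one_iff y).mp hone
  have F1 : ∀ g : G, g ∉ M → ∃ k, g ^ p ^ k = 1 := by
    intro g hgM
    have hgN : g ∉ N := fun h => hgM (hNM h)
    obtain ⟨r, k, hr, hord⟩ := hppo g hgN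
    have hk0 : k ≠ 0 := by
      intro h0; rw [h0, pow_zero] at hord
      exact hgM ((orderOf_eq_one_iff.mp hord) ▸ M.one_mem)
    have hrd : r ∣ orderOf g := hord ▸ dvd_pow_self r hk0
    rcases honly r hr ⟨g, hgN, hrd⟩ with hrp | hrq
    · exact ⟨k, by rw [← hrp, ← hord]; exact pow_orderOf_eq_one g⟩
    · exfalso
      apply hgM
      show π g ∈ K
      apply GK
      refine ⟨k, ?_⟩
      rw [← map_pow, ← hrq, ← hord, pow_orderOf_eq_one, map_one]
  have F2 : ∀ g : G, g ∈ M → g ∉ N → ∃ k, g ^ q ^ k = 1 := by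
    intro g hgM hgN
    obtain ⟨r, k, hr, hord⟩ := hppo g hgN
    haveI : Fact r.Prime := ⟨hr⟩
    have hπg : π g ≠ 1 := fun h => hgN ((QuotientGroup.eq_one_iff g).mp h)
    obtain ⟨s, hs⟩ := hKq ⟨π g, hgM⟩
    have hs' : (π g) ^ q ^ s = 1 := by
      have := congrArg Subtype.val hs; push_cast at this; exact this
    have hdvd : orderOf (π g) ∣ q ^ s := orderOf_dvd_of_pow_eq_one hs'
    have hdvd2 : orderOf (π g) ∣ r ^ k := hord ▸ orderOf_map_dvd π g
    have hne1 : orderOf (π g) ≠ 1 := fun h => hπg (orderOf_eq_one_iff.mp h)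
    obtain ⟨j, _, hj⟩ := (Nat.dvd_prime_pow (Fact.out : q.Prime)).mp hdvd
    have hj0 : j ≠ 0 := fun h0 => hne1 (by rw [hj, h0, pow_zero])
    have hq_dvd : q ∣ r ^ k := dvd_trans (by rw [hj]; exact dvd_pow_self q hj0) hdvd2
    have hqr : q = r := FWaux.prime_eq_of_dvd_pow (Fact.out : q.Prime) hq_dvd
    exact ⟨k, by rw [hqr, ← hord]; exact pow_orderOf_eq_one g⟩
  have hmapM : Subgroup.map π M = K := Subgroup.map_comap_eq_self_of_surjective hπs K
  have hMtop : M ≠ ⊤ := by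
    intro he
    refine hKtop.ne ?_
    rw [← hmapM, he, Subgroup.map_top_of_surjective _ hπs]
  obtain ⟨P⟩ : Nonempty (Sylow p G) := inferInstance
  obtain ⟨Q⟩ : Nonempty (Sylow q G) := inferInstance
  have hQM : (Q : Subgroup G) ≤ M := by
    intro y hy
    by_contra hyM
    obtain ⟨k, hk⟩ := F1 y hyM
    obtain ⟨s, hs⟩ := Q.isPGroup' ⟨y, hy⟩
    have hs' : y ^ q ^ s = 1 := by
      have := congrArg Subtype.val hs; push_cast at this; exact this
    have hone : orderOf y = 1 := by
      have hd := Nat.dvd_gcd (orderOf_dvd_of_pow_eq_one hs') (orderOf_dvd_of_pow_eq_one hk)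
      have hg1 : Nat.gcd (q ^ s) (p ^ k) = 1 := Nat.Coprime.pow _ _ hcopr
      rwa [hg1, Nat.dvd_one] at hd
    exact hyM ((orderOf_eq_one_iff.mp hone) ▸ M.one_mem)
  -- N ⊔ Q = M
  have hJM : N ⊔ (Q : Subgroup G) ≤ M := sup_le hNM hQM
  have hrel1 : N.relIndex M = Nat.card K := by
    conv_lhs => rw [← QuotientGroup.ker_mk' N]
    rw [Subgroup.relIndex_ker, hmapM]
  obtain ⟨nk, hnk⟩ := hKq.exists_card_eq
  have h5 := Subgroup.relIndex_mul_relIndex N (N ⊔ (Q : Subgroup G)) M le_sup_left hJM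
  have h6 : N.relIndex (N ⊔ (Q : Subgroup G)) * (N ⊔ (Q : Subgroup G)).relIndex M = q ^ nk := by
    rw [h5, hrel1, hnk]
  have hdvd1 : (N ⊔ (Q : Subgroup G)).relIndex M ∣ q ^ nk := ⟨_, by rw [← h6, mul_comm]⟩
  have hndvd : ¬ q ∣ (N ⊔ (Q : Subgroup G)).relIndex M := by
    intro hdq
    have h7 : (N ⊔ (Q : Subgroup G)).relIndex M ∣ (N ⊔ (Q : Subgroup G)).index :=
      ⟨M.index, (Subgroup.relIndex_mul_index hJM).symm⟩
    have h8 : (N ⊔ (Q : Subgroup G)).index ∣ (Q : Subgroup G).index :=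
      Subgroup.index_dvd_of_le le_sup_right
    exact Q.not_dvd_index (hdq.trans (h7.trans h8))
  have hNQM : N ⊔ (Q : Subgroup G) = M := by
    refine le_antisymm hJM (Subgroup.relIndex_eq_one.mp ?_)
    obtain ⟨i, _, hi⟩ := (Nat.dvd_prime_pow (Fact.out : q.Prime)).mp hdvd1
    match i, hi with
    | 0, hi => rw [hi, pow_zero]
    | (i+1), hi => exact absurd (by rw [hi]; exact dvd_pow_self q (Nat.succ_ne_zero i)) hndvd
  -- M ⊔ P = ⊤
  have hGMp : IsPGroup p (G ⧸ M) := by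
    intro y
    obtain ⟨g, rfl⟩ := QuotientGroup.mk'_surjective M y
    by_cases hgM : g ∈ M
    · refine ⟨0, ?_⟩
      rw [pow_zero, pow_one]
      exact (QuotientGroup.eq_one_iff g).mpr hgM
    · obtain ⟨k, hk⟩ := F1 g hgM
      exact ⟨k, by rw [← map_pow, hk, map_one]⟩
  obtain ⟨np, hnp⟩ := hGMp.exists_card_eq
  have hMidx : M.index = p ^ np := by rw [Subgroup.index_eq_card, hnp]
  have hsupP : M ⊔ (P : Subgroup G) = ⊤ := by
    rw [← Subgroup.index_eq_one]
    have h1 : (M ⊔ (P : Subgroup G)).index ∣ p ^ np :=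
      hMidx ▸ Subgroup.index_dvd_of_le le_sup_left
    have h2 : ¬ p ∣ (M ⊔ (P : Subgroup G)).index := fun hd =>
      P.not_dvd_index (hd.trans (Subgroup.index_dvd_of_le le_sup_right))
    obtain ⟨i, _, hi⟩ := (Nat.dvd_prime_pow (Fact.out : p.Prime)).mp h1
    match i, hi with
    | 0, hi => rw [hi, pow_zero]
    | (i+1), hi => exact absurd (by rw [hi]; exact dvd_pow_self p (Nat.succ_ne_zero i)) h2
  have hPM : ¬ (P : Subgroup G) ≤ M := fun hle => hMtop (by rw [← hsupP, sup_eq_left.mpr hle])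
  have tri1 : IsFWTriple (P : Subgroup G) ((P : Subgroup G) ⊓ M) := by
    refine ⟨inf_le_left, ?_, ?_, ?_, ?_⟩
    · have he : ((P : Subgroup G) ⊓ M).subgroupOf (P : Subgroup G)
          = M.subgroupOf (P : Subgroup G) := by
        ext y
        simp only [Subgroup.mem_subgroupOf, Subgroup.mem_inf]
        exact and_iff_right y.2
      rw [he]; infer_instance
    · exact lt_of_le_of_ne inf_le_left (fun he => hPM (inf_eq_left.mp he))
    · rw [lt_top_iff_ne_top]
      intro he
      obtain ⟨g, hgN, hgq⟩ := hqd
      obtain ⟨k, hk⟩ := P.isPGroup' ⟨g, he ▸ Subgroup.mem_top g⟩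
      have hk' : g ^ p ^ k = 1 := by
        have := congrArg Subtype.val hk; push_cast at this; exact this
      exact hpq (FWaux.prime_eq_of_dvd_pow (Fact.out : q.Prime)
        (hgq.trans (orderOf_dvd_of_pow_eq_one hk'))).symm
    · intro g hgP
      exact le_inf inf_le_left (FWaux.fw_intersection M F1 P hgP)
  refine ⟨M, hMn, hNM, P, Q, hNQM, hsupP, tri1, ?_⟩
  by_cases hNQ : N ≤ (Q : Subgroup G)
  · left
    rw [← hNQM, sup_eq_right.mpr hNQ]
  · right
    have hyp' : ∀ h : M, h ∉ N.subgroupOf M → ∃ k, h ^ q ^ k = 1 := by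
      intro h hh
      obtain ⟨k, hk⟩ := F2 (h : G) h.2 (fun hm => hh (Subgroup.mem_subgroupOf.mpr hm))
      exact ⟨k, Subtype.ext (by push_cast; exact hk)⟩
    have hQMco : ((Q.subtype hQM : Sylow q M) : Subgroup M) = (Q : Subgroup G).subgroupOf M :=
      Q.coe_subtype hQM
    have hcomapinf : ((Q : Subgroup G) ⊓ N).subgroupOf M
        = (Q : Subgroup G).subgroupOf M ⊓ N.subgroupOf M := by
      ext y
      simp only [Subgroup.mem_subgroupOf, Subgroup.mem_inf]
    obtain ⟨x₀, hx₀Q, hx₀N⟩ : ∃ x₀, x₀ ∈ (Q : Subgroup G) ∧ x₀ ∉ N := by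
      obtain ⟨a, ha⟩ := Subgroup.ne_bot_iff_exists_ne_one.mp hKbot.ne'
      have hmapQ : Subgroup.map π (Q : Subgroup G) = K := by
        have h9 := congrArg (Subgroup.map π) hNQM
        rw [Subgroup.map_sup,
          (Subgroup.map_eq_bot_iff _).mpr (le_of_eq (QuotientGroup.ker_mk' N).symm),
          bot_sup_eq] at h9
        exact h9.trans hmapM
      obtain ⟨x₀, hx₀Q, hx₀⟩ : ∃ x ∈ (Q : Subgroup G), π x = (a : G ⧸ N) := by
        have : (a : G ⧸ N) ∈ Subgroup.map π (Q : Subgroup G) := by rw [hmapQ]; exact a.2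
        exact this
      refine ⟨x₀, hx₀Q, fun hm => ha (Subtype.ext ?_)⟩
      rw [← hx₀]
      exact (QuotientGroup.eq_one_iff x₀).mpr hm
    refine ⟨?_, ?_, ?_, ?_, ?_⟩
    · rw [hcomapinf]; exact inf_le_left
    · have he2 : (((Q : Subgroup G)).subgroupOf M ⊓ N.subgroupOf M).subgroupOf
          ((Q : Subgroup G).subgroupOf M)
          = (N.subgroupOf M).subgroupOf ((Q : Subgroup G).subgroupOf M) := by
        ext y
        simp only [Subgroup.mem_subgroupOf, Subgroup.mem_inf]
        exact and_iff_right y.2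
      rw [hcomapinf, he2]; infer_instance
    · refine lt_of_le_of_ne (by rw [hcomapinf]; exact inf_le_left) (fun he => ?_)
      have h1 : (⟨x₀, hQM hx₀Q⟩ : M) ∈ (Q : Subgroup G).subgroupOf M :=
        Subgroup.mem_subgroupOf.mpr hx₀Q
      rw [← he] at h1
      exact hx₀N (Subgroup.mem_subgroupOf.mp h1).2
    · rw [lt_top_iff_ne_top]
      intro he
      exact hNQ (hNM.trans (subgroupOf_eq_top.mp he))
    · intro g hg
      have hg' : g ∉ ((Q.subtype hQM : Sylow q M) : Subgroup M) := by rw [hQMco]; exact hg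
      have h6 := FWaux.fw_intersection (N.subgroupOf M) hyp' (Q.subtype hQM) hg'
      rw [hQMco] at h6
      rw [hcomapinf]
      exact le_inf inf_le_left h6
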